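/- Let n ≥ 1 and let Ã be the symmetric (2n+2)×(2n+2) matrix defined above (diagonal entries -2, Ã_{1j}=Ã_{j1}=1 and Ã_{2n+2,j}=Ã_{j,2n+2}=-1 for 2≤j≤2n+1, Ã_{1,2n+2}=Ã_{2n+2,1}=2n+1, other entries 0). Then the eigenspace of Ã corresponding to the eigenvalue 2n-1 is one-dimensional over ℝ, spanned by e₁ + e_{2n+2}. -/

import Mathlib

open Matrix Finset

/-- The symmetrized Seifert matrix Ã of size (2n+2)×(2n+2) (0-indexed). -/
def Atilde (n : ℕ) : Matrix (Fin (2*n+2)) (Fin (2*n+2)) ℝ :=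
  Matrix.of fun i j =>
    if i = j then -2
    else if ((i : ℕ) = 0 ∧ (j : ℕ) = 2*n+1) ∨ ((i : ℕ) = 2*n+1 ∧ (j : ℕ) = 0) then (2*n+1 : ℝ)
    else if (i : ℕ) = 0 ∨ (j : ℕ) = 0 then 1
    else if (i : ℕ) = 2*n+1 ∨ (j : ℕ) = 2*n+1 then -1
    else 0

/-- The vector w = e₁ + e_{2n+2}. -/
def wvec (n : ℕ) : Fin (2*n+2) → ℝ :=
  fun i => if (i : ℕ) = 0 ∨ (i : ℕ) = 2*n+1 then 1 else 0

lemma Atilde_apply (n : ℕ) (i j : Fin (2*n+2)) :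
    Atilde n i j = if (i:ℕ) = (j:ℕ) then -2
      else if ((i : ℕ) = 0 ∧ (j : ℕ) = 2*n+1) ∨ ((i : ℕ) = 2*n+1 ∧ (j : ℕ) = 0) then (2*n+1 : ℝ)
      else if (i : ℕ) = 0 ∨ (j : ℕ) = 0 then 1
      else if (i : ℕ) = 2*n+1 ∨ (j : ℕ) = 2*n+1 then -1
      else 0 := by
  simp only [Atilde, Matrix.of_apply, Fin.ext_iff]

lemma sum_pair {N : ℕ} (a b : Fin N) (hab : a ≠ b)
    (f : Fin N → ℝ) (h0 : ∀ j, j ≠ a → j ≠ b → f j = 0) :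
    ∑ j, f j = f a + f b := by
  rw [← Finset.sum_subset (Finset.subset_univ ({a, b} : Finset (Fin N)))]
  · rw [Finset.sum_insert (by simp [hab]), Finset.sum_singleton]
  · intro x _ hx
    simp only [Finset.mem_insert, Finset.mem_singleton, not_or] at hx
    exact h0 x hx.1 hx.2

lemma sum_triple {N : ℕ} (a b c : Fin N) (hab : a ≠ b) (hac : a ≠ c) (hbc : b ≠ c)
    (f : Fin N → ℝ) (h0 : ∀ j, j ≠ a → j ≠ b → j ≠ c → f j = 0) :
    ∑ j, f j = f a + f b + f c := by
  rw [← Finset.sum_subset (Finset.subset_univ ({a, b, c} : Finset (Fin N)))]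
  · rw [Finset.sum_insert (by simp [hab, hac]), Finset.sum_insert (by simp [hbc]),
      Finset.sum_singleton, add_assoc]
  · intro x _ hx
    simp only [Finset.mem_insert, Finset.mem_singleton, not_or] at hx
    exact h0 x hx.1 hx.2.1 hx.2.2

lemma sum_pair_const {N : ℕ} (a b : Fin N) (hab : a ≠ b) (t : ℝ) (f : Fin N → ℝ)
    (h : ∀ j, j ≠ a → j ≠ b → f j = t) :
    ∑ j, f j = f a + f b + (N : ℝ) * t - 2 * t := by
  have h1 : ∑ j, (f j - t) = (f a - t) + (f b - t) :=
    sum_pair a b hab _ (fun j hja hjb => by rw [h j hja hjb]; ring)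
  have h2 : ∑ j : Fin N, (f j - t) = (∑ j, f j) - (N : ℝ) * t := by
    rw [Finset.sum_sub_distrib, Finset.sum_const, Finset.card_univ, Fintype.card_fin,
      nsmul_eq_mul]
  rw [h2] at h1
  linarith

/-- The eigenspace of Ã for eigenvalue 2n-1 is one-dimensional, spanned by w. -/
theorem stmt_1 (n : ℕ) (hn : 1 ≤ n) (v : Fin (2*n+2) → ℝ) :
    (Atilde n).mulVec v = ((2*n : ℝ) - 1) • v ↔ ∃ c : ℝ, v = c • wvec n := by
  set i0 : Fin (2*n+2) := ⟨0, by omega⟩ with hi0def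
  set iL : Fin (2*n+2) := ⟨2*n+1, by omega⟩ with hiLdef
  set i1 : Fin (2*n+2) := ⟨1, by omega⟩ with hi1def
  have hv0 : (i0 : ℕ) = 0 := rfl
  have hvL : (iL : ℕ) = 2*n+1 := rfl
  have hv1 : (i1 : ℕ) = 1 := rfl
  constructor
  · intro h
    -- middle rows
    have hmid : ∀ i : Fin (2*n+2), 0 < (i:ℕ) → (i:ℕ) < 2*n+1 →
        ((2*n+1 : ℝ)) * v i = v i0 - v iL := by
      intro i h1 h2
      have hi := congrFun h i
      rw [Matrix.mulVec, dotProduct] at hi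
      have hne1 : i0 ≠ i := by simp only [Ne, Fin.ext_iff, hv0]; omega
      have hne2 : i0 ≠ iL := by simp only [Ne, Fin.ext_iff, hv0, hvL]; omega
      have hne3 : i ≠ iL := by simp only [Ne, Fin.ext_iff, hvL]; omega
      have hsum : ∑ j, Atilde n i j * v j
          = Atilde n i i0 * v i0 + Atilde n i i * v i + Atilde n i iL * v iL := by
        apply sum_triple i0 i iL hne1 hne2 hne3
        intro j hja hjb hjc
        have hja' : (j : ℕ) ≠ 0 := by simpa [Fin.ext_iff, hv0, -Fin.val_eq_zero_iff] using hja
        have hjb' : (j : ℕ) ≠ (i : ℕ) := by simpa [Fin.ext_iff] using hjb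
        have hjc' : (j : ℕ) ≠ 2*n+1 := by simpa [Fin.ext_iff, hvL] using hjc
        rw [Atilde_apply]
        split_ifs <;> first | omega | ring
      have e1 : Atilde n i i0 = 1 := by rw [Atilde_apply]; split_ifs <;> first | omega | rfl | contradiction | (simp only [or_false, false_or, and_false, false_and] at *; omega)
      have e2 : Atilde n i i = -2 := by rw [Atilde_apply]; split_ifs <;> first | omega | rfl | contradiction | (simp only [or_false, false_or, and_false, false_and] at *; omega)
      have e3 : Atilde n i iL = -1 := by rw [Atilde_apply]; split_ifs <;> first | omega | rfl | contradiction | (simp only [or_false, false_or, and_false, false_and] at *; omega)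
      rw [hsum, e1, e2, e3] at hi
      simp only [Pi.smul_apply, smul_eq_mul] at hi
      linarith
    have h1mid : 0 < (i1 : ℕ) ∧ (i1 : ℕ) < 2*n+1 := by constructor <;> omega
    -- row 0
    have hrow0 := congrFun h i0
    rw [Matrix.mulVec, dotProduct] at hrow0
    have hneL : i0 ≠ iL := by simp only [Ne, Fin.ext_iff, hv0, hvL]; omega
    have hconst : ∀ i : Fin (2*n+2), 0 < (i:ℕ) → (i:ℕ) < 2*n+1 → v i = v i1 := by
      intro i ha hb
      have e1 := hmid i ha hb
      have e2 := hmid i1 h1mid.1 h1mid.2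
      have hne : (2*n+1 : ℝ) ≠ 0 := by positivity
      have := e1.trans e2.symm
      exact mul_left_cancel₀ hne this
    have hsum0 : ∑ j, Atilde n i0 j * v j
        = Atilde n i0 i0 * v i0 + Atilde n i0 iL * v iL
          + ((2*n+2 : ℕ) : ℝ) * v i1 - 2 * v i1 := by
      apply sum_pair_const i0 iL hneL
      intro j hja hjb
      have hja' : (j : ℕ) ≠ 0 := by simpa [Fin.ext_iff, hv0, -Fin.val_eq_zero_iff] using hja
      have hjb' : (j : ℕ) ≠ 2*n+1 := by simpa [Fin.ext_iff, hvL] using hjb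
      have hj : (j : ℕ) < 2*n+2 := j.isLt
      have e1 : Atilde n i0 j = 1 := by rw [Atilde_apply]; split_ifs <;> first | omega | rfl | contradiction | (simp only [or_false, false_or, and_false, false_and] at *; omega)
      rw [e1, one_mul]
      exact hconst j (by omega) (by omega)
    have e1 : Atilde n i0 i0 = -2 := by rw [Atilde_apply]; split_ifs <;> first | omega | rfl | contradiction | (simp only [or_false, false_or, and_false, false_and] at *; omega)
    have e2 : Atilde n i0 iL = (2*n+1 : ℝ) := by
      rw [Atilde_apply]; split_ifs <;> first | omega | rfl | contradiction | (simp only [or_false, false_or, and_false, false_and] at *; omega)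
    rw [hsum0, e1, e2] at hrow0
    simp only [Pi.smul_apply, smul_eq_mul] at hrow0
    push_cast at hrow0
    -- derive t = 0
    have emid := hmid i1 h1mid.1 h1mid.2
    have key : (((2*n+1 : ℝ))^2 - 2*n) * v i1 = 0 := by
      push_cast at emid ⊢
      nlinarith [emid, hrow0]
    have hpos : ((2*n+1 : ℝ))^2 - 2*n > 0 := by
      have : (0:ℝ) ≤ (n:ℝ) := Nat.cast_nonneg n
      nlinarith
    have ht : v i1 = 0 := by
      rcases mul_eq_zero.mp key with hc | hc
      · exact absurd hc (ne_of_gt hpos)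
      · exact hc
    have h0L : v i0 = v iL := by
      push_cast at emid
      rw [ht] at emid
      linarith
    refine ⟨v i0, ?_⟩
    funext i
    simp only [Pi.smul_apply, smul_eq_mul, wvec]
    rcases Nat.lt_trichotomy (i : ℕ) 1 with hc | hc | hc
    · have : i = i0 := by simp [Fin.ext_iff]; omega
      rw [this]
      simp [hv0]
    · have : (i : ℕ) = 1 := hc
      rw [if_neg (by omega)]
      have : v i = v i1 := hconst i (by omega) (by omega)
      rw [this, ht, mul_zero]
    · rcases Nat.lt_or_ge (i : ℕ) (2*n+1) with hd | hd
      · rw [if_neg (by omega)]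
        have : v i = v i1 := hconst i (by omega) (by omega)
        rw [this, ht, mul_zero]
      · have : i = iL := by have := i.isLt; simp [Fin.ext_iff]; omega
        rw [this, if_pos (by omega)]
        rw [← h0L, mul_one]
  · rintro ⟨c, rfl⟩
    funext i
    rw [Matrix.mulVec, dotProduct]
    have hneL : i0 ≠ iL := by simp only [Ne, Fin.ext_iff, hv0, hvL]; omega
    have hsum : ∑ j, Atilde n i j * (c • wvec n) j
        = Atilde n i i0 * (c • wvec n) i0 + Atilde n i iL * (c • wvec n) iL := by
      apply sum_pair i0 iL hneL
      intro j hja hjb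
      have hja' : (j : ℕ) ≠ 0 := by simpa [Fin.ext_iff, hv0, -Fin.val_eq_zero_iff] using hja
      have hjb' : (j : ℕ) ≠ 2*n+1 := by simpa [Fin.ext_iff, hvL] using hjb
      simp [wvec, hja', hjb']
    rw [hsum]
    simp only [Pi.smul_apply, smul_eq_mul, wvec]
    simp only [hv0, hvL, true_or, or_true, if_true]
    rcases Nat.lt_trichotomy (i : ℕ) 1 with hc | hc | hc
    · have hi : (i : ℕ) = 0 := by omega
      have e1 : Atilde n i i0 = -2 := by rw [Atilde_apply]; split_ifs <;> first | omega | rfl | contradiction | (simp only [or_false, false_or, and_false, false_and] at *; omega)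
      have e2 : Atilde n i iL = (2*n+1 : ℝ) := by
        rw [Atilde_apply]; split_ifs <;> first | omega | rfl | contradiction | (simp only [or_false, false_or, and_false, false_and] at *; omega)
      rw [e1, e2, if_pos (by omega)]
      push_cast
      ring
    · have e1 : Atilde n i i0 = 1 := by rw [Atilde_apply]; split_ifs <;> first | omega | rfl | contradiction | (simp only [or_false, false_or, and_false, false_and] at *; omega)
      have e2 : Atilde n i iL = -1 := by
        rw [Atilde_apply]; split_ifs <;> first | omega | rfl | contradiction | (simp only [or_false, false_or, and_false, false_and] at *; omega)
      rw [e1, e2, if_neg (by omega)]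
      ring
    · rcases Nat.lt_or_ge (i : ℕ) (2*n+1) with hd | hd
      · have e1 : Atilde n i i0 = 1 := by rw [Atilde_apply]; split_ifs <;> first | omega | rfl | contradiction | (simp only [or_false, false_or, and_false, false_and] at *; omega)
        have e2 : Atilde n i iL = -1 := by
          rw [Atilde_apply]; split_ifs <;> first | omega | rfl | contradiction | (simp only [or_false, false_or, and_false, false_and] at *; omega)
        rw [e1, e2, if_neg (by omega)]
        ring
      · have hi : (i : ℕ) = 2*n+1 := by have := i.isLt; omega
        have e1 : Atilde n i i0 = (2*n+1 : ℝ) := by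
          rw [Atilde_apply]; split_ifs <;> first | omega | rfl | contradiction | (simp only [or_false, false_or, and_false, false_and] at *; omega)
        have e2 : Atilde n i iL = -2 := by
          rw [Atilde_apply]; split_ifs <;> first | omega | rfl | contradiction | (simp only [or_false, false_or, and_false, false_and] at *; omega)
        rw [e1, e2, if_pos (by omega)]
        push_cast
        ring
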